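/- Let c ≥ 2, let G be a graph, v ∈ V(G), and H ⊆ V(G) \ {v} a set hitting all θ_c minor-models of G. Let C be a connected component of G \ (H ∪ {v}) such that no vertex of C has a neighbor in H. Then no vertex of C belongs to any minimal θ_c minor-model of G. -/

import Mathlib

open SimpleGraph

variable {V : Type}

/-- Connectivity of an induced subgraph via walks in the ambient graph. -/
lemma connected_induce_iff_walks (Γ : SimpleGraph V) (s : Set V) :
    (Γ.induce s).Connected ↔ s.Nonempty ∧
      ∀ x ∈ s, ∀ y ∈ s, ∃ p : Γ.Walk x y, ∀ z ∈ p.support, z ∈ s := by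
  rw [connected_induce_iff, Subgraph.connected_iff_forall_exists_walk_subgraph]
  constructor
  · rintro ⟨hne, hw⟩
    refine ⟨by simpa using hne, fun x hx y hy => ?_⟩
    obtain ⟨p, hp⟩ := hw (by simpa using hx) (by simpa using hy)
    exact ⟨p, fun z hz => by simpa using hp.1 (p.mem_verts_toSubgraph.2 hz)⟩
  · rintro ⟨hne, hw⟩
    refine ⟨by simpa using hne, fun {x y} hx hy => ?_⟩
    obtain ⟨p, hp⟩ := hw x (by simpa using hx) y (by simpa using hy)
    refine ⟨p, ⟨fun z hz => by simpa using hp z (p.mem_verts_toSubgraph.1 hz), ?_⟩⟩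
    intro a b hab
    exact ⟨hp a (p.mem_verts_toSubgraph.1 hab.fst_mem),
      hp b (p.mem_verts_toSubgraph.1 hab.snd_mem), p.toSubgraph.adj_sub hab⟩

lemma induce_singleton_connected (Γ : SimpleGraph V) (y : V) :
    (Γ.induce ({y} : Set V)).Connected := by
  rw [connected_induce_iff_walks]
  refine ⟨⟨y, rfl⟩, fun x hx z hz => ?_⟩
  rcases hx; rcases hz
  exact ⟨Walk.nil, by simp⟩

lemma walk_to_v {Γ : SimpleGraph V} {S U : Set V} {v : V}
    (hU : ∀ a ∈ U, ∀ b ∈ S, Γ.Adj a b → b ∈ U ∪ {v}) :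
    ∀ {x y : V} (p : Γ.Walk x y), (∀ z ∈ p.support, z ∈ S) → x ∈ U → y = v →
      ∃ q : Γ.Walk x v, ∀ z ∈ q.support, z ∈ U ∪ {v} := by
  intro x y p
  induction p with
  | nil =>
    intro _ hx hy
    subst hy
    exact ⟨Walk.nil, by simpa using Or.inl hx⟩
  | @cons a b d h p ih =>
    intro hs hx hy
    have hbS : b ∈ S := hs b (by simp [Walk.support_cons, Walk.start_mem_support])
    rcases hU a hx b hbS h with hbU | hbv
    · obtain ⟨q, hq⟩ := ih (fun z hz => hs z (by simp [Walk.support_cons, hz])) hbU hy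
      refine ⟨Walk.cons h q, fun z hz => ?_⟩
      rw [Walk.support_cons, List.mem_cons] at hz
      rcases hz with rfl | hz
      · exact Or.inl hx
      · exact hq z hz
    · rcases hbv with rfl
      refine ⟨Walk.cons h Walk.nil, fun z hz => ?_⟩
      rw [Walk.support_cons, List.mem_cons] at hz
      rcases hz with rfl | hz
      · exact Or.inl hx
      · simp only [Walk.support_nil, List.mem_singleton] at hz
        exact Or.inr hz

lemma walk_avoid {Γ : SimpleGraph V} {S U : Set V} {v : V}
    (hU : ∀ a ∈ U, ∀ b ∈ S, Γ.Adj a b → b ∈ U ∪ {v}) :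
    ∀ {x y : V} (p : Γ.Walk x y), (∀ z ∈ p.support, z ∈ S) → x ∈ S → x ∉ U → y = v →
      ∃ q : Γ.Walk x v, ∀ z ∈ q.support, z ∈ S \ U := by
  intro x y p
  induction p with
  | nil =>
    intro _ hxS hxU hy
    subst hy
    exact ⟨Walk.nil, by simpa using ⟨hxS, hxU⟩⟩
  | @cons a b d h p ih =>
    intro hs hxS hxU hy
    have hbS : b ∈ S := hs b (by simp [Walk.support_cons, Walk.start_mem_support])
    by_cases hbU : b ∈ U
    · rcases hU b hbU a hxS h.symm with haU | hav
      · exact absurd haU hxU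
      · rcases hav with rfl
        exact ⟨Walk.nil, by simpa using ⟨hxS, hxU⟩⟩
    · obtain ⟨q, hq⟩ := ih (fun z hz => hs z (by simp [Walk.support_cons, hz])) hbS hbU hy
      refine ⟨Walk.cons h q, fun z hz => ?_⟩
      rw [Walk.support_cons, List.mem_cons] at hz
      rcases hz with rfl | hz
      · exact ⟨hxS, hxU⟩
      · exact hq z hz

lemma walk_stay {Γ : SimpleGraph V} {S U : Set V}
    (hU : ∀ a ∈ U, ∀ b ∈ S, Γ.Adj a b → b ∈ U) :
    ∀ {x y : V} (p : Γ.Walk x y), (∀ z ∈ p.support, z ∈ S) → x ∈ U → y ∈ U := by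
  intro x y p
  induction p with
  | nil => intro _ hx; exact hx
  | @cons a b d h p ih =>
    intro hs hx
    have hbS : b ∈ S := hs b (by simp [Walk.support_cons, Walk.start_mem_support])
    exact ih (fun z hz => hs z (by simp [Walk.support_cons, hz])) (hU a hx b hbS h)

lemma induce_mono_graph {Γ Γ' : SimpleGraph V} (h : Γ ≤ Γ') (s : Set V) :
    Γ.induce s ≤ Γ'.induce s := fun _ _ hab => h hab

/-- iso between double induce and induce on image. -/
noncomputable def induceInduceIso (Γ : SimpleGraph V) (s : Set V) (A : Set s) :
    (Γ.induce s).induce A ≃g Γ.induce (Subtype.val '' A) where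
  toEquiv := Equiv.Set.image Subtype.val A Subtype.val_injective
  map_rel_iff' := Iff.rfl

/-- `G` contains θ_c (two vertices joined by `c` parallel edges) as a minor. -/
def HasThetaMinor {V : Type} (G : SimpleGraph V) (c : ℕ) : Prop :=
  ∃ A B : Set V, A.Nonempty ∧ B.Nonempty ∧ Disjoint A B ∧
    (G.induce A).Connected ∧ (G.induce B).Connected ∧
    ∃ E : Finset (V × V), E.card = c ∧ ∀ e ∈ E, e.1 ∈ A ∧ e.2 ∈ B ∧ G.Adj e.1 e.2

/-- `M` is a minimal minor-model of θ_c in `G`. -/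
def IsMinimalThetaModel {V : Type} (G : SimpleGraph V) (c : ℕ) (M : G.Subgraph) : Prop :=
  HasThetaMinor M.coe c ∧ ∀ M' : G.Subgraph, M' < M → ¬ HasThetaMinor M'.coe c

/-- `C` is a connected component of the subgraph of `G` induced on `W`. -/
def IsCompOf {V : Type} (G : SimpleGraph V) (W C : Set V) : Prop :=
  C ⊆ W ∧ C.Nonempty ∧ (G.induce C).Connected ∧
    ∀ C', C ⊆ C' → C' ⊆ W → (G.induce C').Connected → C' = C

lemma connected_image {Γ : SimpleGraph V} {s : Set V} {A : Set s}
    (h : ((Γ.induce s).induce A).Connected) : (Γ.induce (Subtype.val '' A)).Connected :=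
  h.map (induceInduceIso Γ s A).toHom (induceInduceIso Γ s A).toEquiv.surjective

lemma connected_preimage {Γ : SimpleGraph V} {s : Set V} {A : Set s}
    (h : (Γ.induce (Subtype.val '' A)).Connected) : ((Γ.induce s).induce A).Connected :=
  h.map (induceInduceIso Γ s A).symm.toHom (induceInduceIso Γ s A).symm.toEquiv.surjective

lemma hasThetaMinor_induce_iff (Γ : SimpleGraph V) (s : Set V) (c : ℕ) :
    HasThetaMinor (Γ.induce s) c ↔ ∃ A B : Set V, A ⊆ s ∧ B ⊆ s ∧ A.Nonempty ∧ B.Nonempty ∧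
      Disjoint A B ∧ (Γ.induce A).Connected ∧ (Γ.induce B).Connected ∧
      ∃ E : Finset (V × V), E.card = c ∧ ∀ e ∈ E, e.1 ∈ A ∧ e.2 ∈ B ∧ Γ.Adj e.1 e.2 := by
  constructor
  · rintro ⟨A, B, hAne, hBne, hd, cA, cB, E, hc, hE⟩
    refine ⟨Subtype.val '' A, Subtype.val '' B, Subtype.coe_image_subset s A,
      Subtype.coe_image_subset s B, hAne.image _, hBne.image _,
      (Set.disjoint_image_iff Subtype.val_injective).2 hd,
      connected_image cA, connected_image cB,
      E.map ⟨Prod.map Subtype.val Subtype.val,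
        Subtype.val_injective.prodMap Subtype.val_injective⟩,
      by rw [Finset.card_map]; exact hc, ?_⟩
    intro e he
    obtain ⟨a, ha, rfl⟩ := Finset.mem_map.1 he
    obtain ⟨h1, h2, h3⟩ := hE a ha
    exact ⟨⟨a.1, h1, rfl⟩, ⟨a.2, h2, rfl⟩, h3⟩
  · rintro ⟨A, B, hAs, hBs, hAne, hBne, hd, cA, cB, E, hc, hE⟩
    have himA : Subtype.val '' (Subtype.val ⁻¹' A : Set s) = A := by
      rw [Subtype.image_preimage_coe, Set.inter_eq_self_of_subset_right hAs]
    have him : Subtype.val '' (Subtype.val ⁻¹' B : Set s) = B := by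
      rw [Subtype.image_preimage_coe, Set.inter_eq_self_of_subset_right hBs]
    obtain ⟨xa, hxa⟩ := hAne
    obtain ⟨xb, hxb⟩ := hBne
    refine ⟨Subtype.val ⁻¹' A, Subtype.val ⁻¹' B, ⟨⟨xa, hAs hxa⟩, hxa⟩, ⟨⟨xb, hBs hxb⟩, hxb⟩,
      hd.preimage _, connected_preimage (by rw [himA]; exact cA),
      connected_preimage (by rw [him]; exact cB), ?_⟩
    refine ⟨E.attach.map ⟨fun e => ((⟨e.1.1, hAs (hE e.1 e.2).1⟩ : s),
      (⟨e.1.2, hBs (hE e.1 e.2).2.1⟩ : s)), ?_⟩, by rw [Finset.card_map, Finset.card_attach]; exact hc, ?_⟩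
    · intro a b hab
      have h1 : a.1.1 = b.1.1 := congrArg (fun x => (x.1 : V)) hab
      have h2 : a.1.2 = b.1.2 := congrArg (fun x => (x.2 : V)) hab
      exact Subtype.ext (Prod.ext h1 h2)
    · intro e he
      obtain ⟨a, _, rfl⟩ := Finset.mem_map.1 he
      obtain ⟨h1, h2, h3⟩ := hE a.1 a.2
      exact ⟨h1, h2, h3⟩

lemma coe_eq_spanningCoe_induce {G : SimpleGraph V} (M : G.Subgraph) :
    M.coe = M.spanningCoe.induce M.verts := rfl

lemma induce_coe_eq {G : SimpleGraph V} (M : G.Subgraph) (s : Set V) :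
    (M.induce s).coe = M.spanningCoe.induce s := by
  ext ⟨a, ha⟩ ⟨b, hb⟩
  simp only [Subgraph.coe_adj, Subgraph.induce_adj, comap_adj, Function.Embedding.coe_subtype,
    Subgraph.spanningCoe_adj]
  exact ⟨fun h => h.2.2, fun h => ⟨ha, hb, h⟩⟩

lemma subgraph_induce_le {G : SimpleGraph V} (M : G.Subgraph) {s : Set V} (hs : s ⊆ M.verts) :
    M.induce s ≤ M := ⟨hs, fun _ _ h => h.2.2⟩

/-- If `H` hits all θ_c minor-models of `G`, `v ∉ H`, and `C` is a component of
`G \ (H ∪ {v})` with no neighbor in `H`, then no vertex of `C` lies in any minimal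
θ_c minor-model of `G`. -/
theorem irrelevant_component {V : Type} (G : SimpleGraph V) (c : ℕ) (hc : 2 ≤ c)
    (v : V) (H : Set V) (hvH : v ∉ H)
    (hhit : ¬ HasThetaMinor (G.induce Hᶜ) c)
    (C : Set V) (hC : IsCompOf G ((H ∪ {v})ᶜ) C)
    (hnoadj : ∀ u ∈ C, ∀ w ∈ H, ¬ G.Adj u w) :
    ∀ u ∈ C, ∀ M : G.Subgraph, IsMinimalThetaModel G c M → u ∉ M.verts := by
  intro u hu M hM hum
  obtain ⟨hMth, hmin⟩ := hM
  obtain ⟨hCW, hCne, hCconn, hCmax⟩ := hC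
  have hvC : v ∉ C := fun h => hCW h (Or.inr rfl)
  have hCH : C ⊆ Hᶜ := fun x hx hxH => hCW hx (Or.inl hxH)
  -- every neighbor of a vertex of `C` is in `C` or equals `v`
  have nbC : ∀ x ∈ C, ∀ y, G.Adj x y → y ∈ C ∨ y = v := by
    intro x hx y hadj
    by_cases hyC : y ∈ C
    · exact Or.inl hyC
    by_cases hyv : y = v
    · exact Or.inr hyv
    by_cases hyH : y ∈ H
    · exact absurd hadj (hnoadj x hx y hyH)
    have hcup : (G.induce (C ∪ {y})).Connected :=
      connected_induce_union hCconn.preconnected (induce_singleton_connected G y).preconnected hx rfl hadj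
    have hCy : C ∪ {y} = C := by
      refine hCmax _ Set.subset_union_left ?_ hcup
      intro z hz
      rcases hz with hz | hz
      · exact hCW hz
      · rcases hz with rfl
        intro hmem
        rcases hmem with h | h
        · exact hyH h
        · exact hyv h
    exact absurd (hCy ▸ (Or.inr rfl : y ∈ C ∪ {y})) hyC
  -- extract the theta-minor data over `M.spanningCoe`
  have hMth' : HasThetaMinor (M.spanningCoe.induce M.verts) c := by
    rw [← coe_eq_spanningCoe_induce]; exact hMth
  rw [hasThetaMinor_induce_iff] at hMth'
  obtain ⟨A, B, hAM, hBM, hAne, hBne, hdAB, hAconn, hBconn, E, hEc, hE⟩ := hMth'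
  have hGA : ∀ {a b : V}, M.spanningCoe.Adj a b → G.Adj a b := fun h => M.adj_sub h
  have hAconnG : (G.induce A).Connected := hAconn.mono (induce_mono_graph M.spanningCoe_le A)
  have hBconnG : (G.induce B).Connected := hBconn.mono (induce_mono_graph M.spanningCoe_le B)
  -- a connected set avoiding `v` and meeting `C` is contained in `C`
  have dich : ∀ S : Set V, (M.spanningCoe.induce S).Connected → v ∉ S →
      ∀ x ∈ S, x ∈ C → ∀ y ∈ S, y ∈ C := by
    intro S hconn hvS x hxS hxC y hyS
    rw [connected_induce_iff_walks] at hconn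
    obtain ⟨p, hp⟩ := hconn.2 x hxS y hyS
    have hU : ∀ a ∈ S ∩ C, ∀ b ∈ S, M.spanningCoe.Adj a b → b ∈ S ∩ C := by
      intro a ha b hb hadj
      rcases nbC a ha.2 b (hGA hadj) with h | h
      · exact ⟨hb, h⟩
      · exact absurd (h ▸ hb) hvS
    exact (walk_stay hU p hp ⟨hxS, hxC⟩).2
  -- producing a theta minor inside `Hᶜ` contradicts `hhit`
  have hhitstep : ∀ (A' B' : Set V) (E' : Finset (V × V)), E'.card = c →
      A' ⊆ Hᶜ → B' ⊆ Hᶜ → A'.Nonempty → B'.Nonempty → Disjoint A' B' →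
      (G.induce A').Connected → (G.induce B').Connected →
      (∀ e ∈ E', e.1 ∈ A' ∧ e.2 ∈ B' ∧ G.Adj e.1 e.2) → False := by
    intro A' B' E' h0 h1 h2 h3 h4 h5 h6 h7 h8
    exact hhit ((hasThetaMinor_induce_iff G Hᶜ c).2
      ⟨A', B', h1, h2, h3, h4, h5, h6, h7, E', h0, h8⟩)
  -- producing a theta minor avoiding `C` contradicts minimality of `M`
  have hremstep : ∀ (A' B' : Set V) (E' : Finset (V × V)), E'.card = c →
      A' ⊆ M.verts \ C → B' ⊆ M.verts \ C → A'.Nonempty → B'.Nonempty → Disjoint A' B' →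
      (M.spanningCoe.induce A').Connected → (M.spanningCoe.induce B').Connected →
      (∀ e ∈ E', e.1 ∈ A' ∧ e.2 ∈ B' ∧ M.spanningCoe.Adj e.1 e.2) → False := by
    intro A' B' E' h0 h1 h2 h3 h4 h5 h6 h7 h8
    have hlt : M.induce (M.verts \ C) < M := by
      refine lt_of_le_of_ne (subgraph_induce_le M Set.diff_subset) ?_
      intro heq
      have hv : (M.induce (M.verts \ C)).verts = M.verts := congrArg Subgraph.verts heq
      rw [Subgraph.induce_verts] at hv
      have h2 : u ∈ M.verts \ C := by rw [hv]; exact hum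
      exact h2.2 hu
    refine hmin _ hlt ?_
    rw [induce_coe_eq]
    exact (hasThetaMinor_induce_iff M.spanningCoe (M.verts \ C) c).2
      ⟨A', B', h1, h2, h3, h4, h5, h6, h7, E', h0, h8⟩
  -- core argument, assuming `v` belongs to the first branch set
  have core : ∀ (A' B' : Set V) (E' : Finset (V × V)), E'.card = c →
      A' ⊆ M.verts → B' ⊆ M.verts → B'.Nonempty → Disjoint A' B' →
      (M.spanningCoe.induce A').Connected → (M.spanningCoe.induce B').Connected →
      (∀ e ∈ E', e.1 ∈ A' ∧ e.2 ∈ B' ∧ M.spanningCoe.Adj e.1 e.2) → v ∈ A' → False := by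
    intro A' B' E' hEc' hAM' hBM' hBne' hd' hAconn' hBconn' hE' hvA'
    have hvB' : v ∉ B' := fun h => Set.disjoint_left.1 hd' hvA' h
    by_cases hBC : ∃ b ∈ B', b ∈ C
    · -- then B' ⊆ C, and we find a theta minor inside Hᶜ
      obtain ⟨b0, hb0B, hb0C⟩ := hBC
      have hBsubC : ∀ y ∈ B', y ∈ C := dich B' hBconn' hvB' b0 hb0B hb0C
      have hUA : ∀ a ∈ A' ∩ C, ∀ b ∈ A', G.Adj a b → b ∈ (A' ∩ C) ∪ {v} := by
        intro a ha b hb hadj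
        rcases nbC a ha.2 b hadj with h | h
        · exact Or.inl ⟨hb, h⟩
        · exact Or.inr h
      have hAconnG' : (G.induce A').Connected :=
        hAconn'.mono (induce_mono_graph M.spanningCoe_le A')
      rw [connected_induce_iff_walks] at hAconnG'
      have hto : ∀ x ∈ (A' ∩ C) ∪ {v}, ∃ q : G.Walk x v,
          ∀ z ∈ q.support, z ∈ (A' ∩ C) ∪ {v} := by
        intro x hx
        rcases hx with hx | hx
        · obtain ⟨p, hp⟩ := hAconnG'.2 x hx.1 v hvA'
          exact walk_to_v hUA p hp hx rfl
        · rcases hx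
          exact ⟨Walk.nil, by simp⟩
      have hconnA'' : (G.induce ((A' ∩ C) ∪ {v})).Connected := by
        rw [connected_induce_iff_walks]
        refine ⟨⟨v, Or.inr rfl⟩, fun x hx y hy => ?_⟩
        obtain ⟨q1, h1⟩ := hto x hx
        obtain ⟨q2, h2⟩ := hto y hy
        refine ⟨q1.append q2.reverse, fun z hz => ?_⟩
        rcases (Walk.mem_support_append_iff _ _).1 hz with h | h
        · exact h1 z h
        · exact h2 z (by rwa [Walk.support_reverse, List.mem_reverse] at h)
      refine hhitstep ((A' ∩ C) ∪ {v}) B' E' hEc' ?_ ?_ ⟨v, Or.inr rfl⟩ hBne' ?_ hconnA''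
        (hBconn'.mono (induce_mono_graph M.spanningCoe_le B')) ?_
      · intro x hx
        rcases hx with hx | hx
        · exact hCH hx.2
        · rcases hx; exact hvH
      · exact fun y hy => hCH (hBsubC y hy)
      · rw [Set.disjoint_left]
        intro x hx hxB
        rcases hx with hx | hx
        · exact Set.disjoint_left.1 hd' hx.1 hxB
        · rcases hx; exact hvB' hxB
      · intro e he
        obtain ⟨h1, h2, h3⟩ := hE' e he
        have hg := hGA h3
        refine ⟨?_, h2, hg⟩
        rcases nbC e.2 (hBsubC _ h2) e.1 hg.symm with h | h
        · exact Or.inl ⟨h1, h⟩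
        · exact Or.inr h
    · -- B' avoids C; delete C from the model, contradicting minimality
      push_neg at hBC
      have hUA : ∀ a ∈ A' ∩ C, ∀ b ∈ A', M.spanningCoe.Adj a b → b ∈ (A' ∩ C) ∪ {v} := by
        intro a ha b hb hadj
        rcases nbC a ha.2 b (hGA hadj) with h | h
        · exact Or.inl ⟨hb, h⟩
        · exact Or.inr h
      have hAconnW := hAconn'
      rw [connected_induce_iff_walks] at hAconnW
      have hto : ∀ x ∈ A' \ C, ∃ q : M.spanningCoe.Walk x v,
          ∀ z ∈ q.support, z ∈ A' \ C := by
        intro x hx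
        obtain ⟨p, hp⟩ := hAconnW.2 x hx.1 v hvA'
        obtain ⟨q, hq⟩ := walk_avoid hUA p hp hx.1 (fun h => hx.2 h.2) rfl
        exact ⟨q, fun z hz => ⟨(hq z hz).1, fun hzC => (hq z hz).2 ⟨(hq z hz).1, hzC⟩⟩⟩
      have hconnA'' : (M.spanningCoe.induce (A' \ C)).Connected := by
        rw [connected_induce_iff_walks]
        refine ⟨⟨v, hvA', hvC⟩, fun x hx y hy => ?_⟩
        obtain ⟨q1, h1⟩ := hto x hx
        obtain ⟨q2, h2⟩ := hto y hy
        refine ⟨q1.append q2.reverse, fun z hz => ?_⟩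
        rcases (Walk.mem_support_append_iff _ _).1 hz with h | h
        · exact h1 z h
        · exact h2 z (by rwa [Walk.support_reverse, List.mem_reverse] at h)
      refine hremstep (A' \ C) B' E' hEc' (fun x hx => ⟨hAM' hx.1, hx.2⟩)
        (fun y hy => ⟨hBM' hy, hBC y hy⟩) ⟨v, hvA', hvC⟩ hBne'
        (Set.disjoint_of_subset_left Set.diff_subset hd') hconnA'' hBconn' ?_
      intro e he
      obtain ⟨h1, h2, h3⟩ := hE' e he
      refine ⟨⟨h1, ?_⟩, h2, h3⟩
      intro h1C
      rcases nbC e.1 h1C e.2 (hGA h3) with h | h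
      · exact hBC e.2 h2 h
      · exact hvB' (h ▸ h2)
  have hEne : E.Nonempty := by
    rw [← Finset.card_pos, hEc]; omega
  by_cases hvA : v ∈ A
  · exact core A B E hEc hAM hBM hBne hdAB hAconn hBconn hE hvA
  by_cases hvB : v ∈ B
  · refine core B A (E.map ⟨Prod.swap, Prod.swap_injective⟩)
      (by rw [Finset.card_map]; exact hEc) hBM hAM hAne hdAB.symm hBconn hAconn ?_ hvB
    intro e he
    obtain ⟨a, ha, rfl⟩ := Finset.mem_map.1 he
    obtain ⟨h1, h2, h3⟩ := hE a ha
    exact ⟨h2, h1, h3.symm⟩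
  · -- v is in neither branch set
    by_cases hAC : ∃ a ∈ A, a ∈ C
    · obtain ⟨a0, ha1, ha2⟩ := hAC
      have hAsubC := dich A hAconn hvA a0 ha1 ha2
      by_cases hBC : ∃ b ∈ B, b ∈ C
      · obtain ⟨b0, hb1, hb2⟩ := hBC
        have hBsubC := dich B hBconn hvB b0 hb1 hb2
        exact hhitstep A B E hEc (fun x hx => hCH (hAsubC x hx))
          (fun y hy => hCH (hBsubC y hy)) hAne hBne hdAB hAconnG hBconnG
          (fun e he => ⟨(hE e he).1, (hE e he).2.1, hGA (hE e he).2.2⟩)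
      · push_neg at hBC
        obtain ⟨e, he⟩ := hEne
        obtain ⟨p1, p2, p3⟩ := hE e he
        rcases nbC e.1 (hAsubC _ p1) e.2 (hGA p3) with h | h
        · exact hBC _ p2 h
        · exact hvB (h ▸ p2)
    · push_neg at hAC
      by_cases hBC : ∃ b ∈ B, b ∈ C
      · obtain ⟨b0, hb1, hb2⟩ := hBC
        have hBsubC := dich B hBconn hvB b0 hb1 hb2
        obtain ⟨e, he⟩ := hEne
        obtain ⟨p1, p2, p3⟩ := hE e he
        rcases nbC e.2 (hBsubC _ p2) e.1 (hGA p3).symm with h | h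
        · exact hAC _ p1 h
        · exact hvA (h ▸ p1)
      · push_neg at hBC
        exact hremstep A B E hEc (fun x hx => ⟨hAM hx, hAC x hx⟩)
          (fun y hy => ⟨hBM hy, hBC y hy⟩) hAne hBne hdAB hAconn hBconn hE
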